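/- Strong duality for entropy-regularized linear programming over the simplex: for a finite set Y, θ : Y → ℝ, and a single linear equality constraint A·p = c (with A : Y → ℝ, c ∈ ℝ, feasible), the maximum of ∑_y p(y)θ(y) + H(p) over probability distributions satisfying the constraint equals the minimum over λ ∈ ℝ of log(∑_y exp(θ(y) − λ·A(y))) + λ·c, provided the constraint set contains a strictly positive distribution. -/

import Mathlib

open Real Finset Filter

/-- Gibbs variational inequality. -/
lemma gibbs_ineq {Y : Type*} [Fintype Y] [Nonempty Y] (p g : Y → ℝ)
    (hp : ∀ y, 0 ≤ p y) (hs : (∑ y, p y) = 1) :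
    (∑ y, p y * g y) - (∑ y, p y * Real.log (p y)) ≤ Real.log (∑ y, Real.exp (g y)) := by
  set Z : ℝ := ∑ y, Real.exp (g y) with hZdef
  have hZ : 0 < Z := Finset.sum_pos (fun y _ => Real.exp_pos _) Finset.univ_nonempty
  have key : ∀ y, p y * g y - p y * Real.log (p y) ≤
      p y * Real.log Z + Real.exp (g y) / Z - p y := by
    intro y
    rcases eq_or_lt_of_le (hp y) with h0 | h0
    · simp [← h0]
      positivity
    · have hpos : 0 < Real.exp (g y) / (p y * Z) := by positivity
      have h1 := Real.log_le_sub_one_of_pos hpos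
      have h2 : Real.log (Real.exp (g y) / (p y * Z)) =
          g y - Real.log (p y) - Real.log Z := by
        rw [Real.log_div (Real.exp_ne_zero _) (by positivity),
          Real.log_exp, Real.log_mul h0.ne' hZ.ne']
        ring
      rw [h2] at h1
      have h3 : p y * (g y - Real.log (p y) - Real.log Z) ≤
          p y * (Real.exp (g y) / (p y * Z) - 1) := by
        exact mul_le_mul_of_nonneg_left h1 (hp y)
      have h4 : p y * (Real.exp (g y) / (p y * Z)) = Real.exp (g y) / Z := by
        field_simp
      nlinarith [h3, h4]
  calc (∑ y, p y * g y) - (∑ y, p y * Real.log (p y))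
      = ∑ y, (p y * g y - p y * Real.log (p y)) := by rw [Finset.sum_sub_distrib]
    _ ≤ ∑ y, (p y * Real.log Z + Real.exp (g y) / Z - p y) :=
        Finset.sum_le_sum (fun y _ => key y)
    _ = (∑ y, p y) * Real.log Z + (∑ y, Real.exp (g y)) / Z - ∑ y, p y := by
        rw [Finset.sum_sub_distrib, Finset.sum_add_distrib, ← Finset.sum_mul,
          ← Finset.sum_div]
    _ = Real.log Z := by
        rw [hs, ← hZdef, div_self hZ.ne']; ring

/-- Existence of the optimal dual variable. -/
lemma exists_lam {Y : Type*} [Fintype Y] [Nonempty Y] (θ A : Y → ℝ) (c : ℝ)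
    (hfeas : ∃ p : Y → ℝ, (∀ y, 0 < p y) ∧ (∑ y, p y) = 1 ∧
      (∑ y, A y * p y) = c) :
    ∃ l : ℝ, (∑ y, A y * Real.exp (θ y - l * A y)) =
      c * ∑ y, Real.exp (θ y - l * A y) := by
  obtain ⟨p, hp, hs, hc⟩ := hfeas
  set S : ℝ → ℝ := fun l => ∑ y, Real.exp (θ y - l * A y) with hSdef
  have hS : ∀ l, 0 < S l := fun l =>
    Finset.sum_pos (fun y _ => Real.exp_pos _) Finset.univ_nonempty
  by_cases hconst : ∀ y, A y = c
  · refine ⟨0, ?_⟩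
    rw [Finset.mul_sum]
    exact Finset.sum_congr rfl (fun y _ => by rw [hconst y])
  -- A is not constantly c; get points on both sides of c
  push_neg at hconst
  obtain ⟨y0, hy0⟩ := hconst
  have hlow : ∃ y1, A y1 < c := by
    by_contra h
    push_neg at h
    have : c < ∑ y, A y * p y := by
      calc c = ∑ y, c * p y := by rw [← Finset.mul_sum, hs, mul_one]
        _ < ∑ y, A y * p y := by
            apply Finset.sum_lt_sum (fun y _ => mul_le_mul_of_nonneg_right (h y) (hp y).le)
            exact ⟨y0, Finset.mem_univ _, by
              have := lt_of_le_of_ne (h y0) (Ne.symm hy0)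
              exact mul_lt_mul_of_pos_right this (hp y0)⟩
    linarith [hc]
  have hhigh : ∃ y2, c < A y2 := by
    by_contra h
    push_neg at h
    have : (∑ y, A y * p y) < c := by
      calc (∑ y, A y * p y) < ∑ y, c * p y := by
            apply Finset.sum_lt_sum (fun y _ => mul_le_mul_of_nonneg_right (h y) (hp y).le)
            exact ⟨y0, Finset.mem_univ _, by
              have := lt_of_le_of_ne (h y0) hy0
              exact mul_lt_mul_of_pos_right this (hp y0)⟩
        _ = c := by rw [← Finset.mul_sum, hs, mul_one]
    linarith [hc]
  obtain ⟨y1, hy1⟩ := hlow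
  obtain ⟨y2, hy2⟩ := hhigh
  set F : ℝ → ℝ := fun l => Real.log (S l) + l * c with hFdef
  -- derivative of S
  have hderivS : ∀ l, HasDerivAt S (∑ y, (-A y) * Real.exp (θ y - l * A y)) l := by
    intro l
    apply HasDerivAt.fun_sum
    intro y _
    have h1 : HasDerivAt (fun x : ℝ => θ y - x * A y) (-A y) l := by
      simpa using (hasDerivAt_mul_const (A y)).const_sub (θ y)
    simpa [mul_comm] using h1.exp
  have hderivF : ∀ l, HasDerivAt F
      ((∑ y, (-A y) * Real.exp (θ y - l * A y)) / S l + c) l := by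
    intro l
    exact ((hderivS l).log (hS l).ne').add
      (by simpa using (hasDerivAt_mul_const c : HasDerivAt (fun x : ℝ => x * c) c l))
  -- continuity
  have hcontS : Continuous S := by
    apply continuous_finset_sum
    intro y _
    exact (continuous_const.sub (continuous_id.mul continuous_const)).rexp
  have hcontF : Continuous F :=
    (hcontS.log (fun l => (hS l).ne')).add (continuous_id.mul continuous_const)
  -- lower bounds
  have hlb : ∀ (y : Y) (l : ℝ), θ y + l * (c - A y) ≤ F l := by
    intro y l
    have h1 : Real.exp (θ y - l * A y) ≤ S l :=
      Finset.single_le_sum (f := fun z => Real.exp (θ z - l * A z)) (fun z _ => (Real.exp_pos _).le) (Finset.mem_univ y)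
    have h2 : θ y - l * A y ≤ Real.log (S l) :=
      (Real.le_log_iff_exp_le (hS l)).mpr h1
    simp only [hFdef]
    nlinarith [h2]
  -- coercivity
  have htop : Tendsto F atTop atTop := by
    apply tendsto_atTop_mono (fun l => hlb y1 l)
    apply tendsto_atTop_add_const_left
    exact Tendsto.atTop_mul_const (by linarith) tendsto_id
  have hbot : Tendsto F atBot atTop := by
    apply tendsto_atTop_mono (fun l => hlb y2 l)
    apply tendsto_atTop_add_const_left
    have : Tendsto (fun l : ℝ => l * (A y2 - c)) atBot atBot :=
      Tendsto.atBot_mul_const (by linarith) tendsto_id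
    have h2 : Tendsto (fun l : ℝ => -(l * (A y2 - c))) atBot atTop :=
      tendsto_neg_atBot_atTop.comp this
    convert h2 using 2 with l
    ring
  have hcoc : Tendsto F (Filter.cocompact ℝ) atTop := by
    rw [cocompact_eq_atBot_atTop]
    exact Filter.Tendsto.sup hbot htop  -- maybe tendsto_sup.mpr ⟨hbot, htop⟩
  obtain ⟨x, hx⟩ := hcontF.exists_forall_le hcoc
  have hmin : IsLocalMin F x := Filter.Eventually.of_forall hx
  have hd0 : (∑ y, (-A y) * Real.exp (θ y - x * A y)) / S x + c = 0 := by
    rw [← (hderivF x).deriv]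
    exact hmin.deriv_eq_zero
  refine ⟨x, ?_⟩
  have hsum : (∑ y, (-A y) * Real.exp (θ y - x * A y)) =
      -∑ y, A y * Real.exp (θ y - x * A y) := by
    rw [← Finset.sum_neg_distrib]
    exact Finset.sum_congr rfl (fun y _ => by ring)
  rw [hsum] at hd0
  have hSx := (hS x).ne'
  field_simp at hd0
  have e : ∀ y, A y * x = x * A y := fun y => mul_comm _ _
  simp only [e, hSdef] at hd0
  linarith [hd0]

theorem entropy_lp_strong_duality
    (Y : Type*) [Fintype Y] [Nonempty Y] (θ : Y → ℝ) (A : Y → ℝ) (c : ℝ)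
    (hfeas : ∃ p : Y → ℝ, (∀ y, 0 < p y) ∧ (∑ y, p y) = 1 ∧
      (∑ y, A y * p y) = c) :
    ∃ v : ℝ,
      IsGreatest
        {u : ℝ | ∃ p : Y → ℝ, (∀ y, 0 ≤ p y) ∧ (∑ y, p y) = 1 ∧
          (∑ y, A y * p y) = c ∧
          u = (∑ y, p y * θ y) + (-∑ y, p y * Real.log (p y))} v ∧
      IsLeast
        {u : ℝ | ∃ lam : ℝ,
          u = Real.log (∑ y, Real.exp (θ y - lam * A y)) + lam * c} v := by
  obtain ⟨l, hl⟩ := exists_lam θ A c hfeas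
  set Z : ℝ := ∑ y, Real.exp (θ y - l * A y) with hZdef
  have hZ : 0 < Z := Finset.sum_pos (fun y _ => Real.exp_pos _) Finset.univ_nonempty
  set q : Y → ℝ := fun y => Real.exp (θ y - l * A y) / Z with hqdef
  have hq0 : ∀ y, 0 < q y := fun y => by positivity
  have hq1 : (∑ y, q y) = 1 := by rw [hqdef]; rw [← Finset.sum_div, ← hZdef]; exact div_self hZ.ne'
  have hqc : (∑ y, A y * q y) = c := by
    have : (∑ y, A y * q y) = (∑ y, A y * Real.exp (θ y - l * A y)) / Z := by
      rw [Finset.sum_div]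
      exact Finset.sum_congr rfl (fun y _ => by rw [hqdef]; ring)
    rw [this, hl, mul_div_assoc, div_self hZ.ne', mul_one]
  -- the value at q equals log Z + l * c
  have hlogq : ∀ y, Real.log (q y) = θ y - l * A y - Real.log Z := by
    intro y
    rw [hqdef]
    simp only
    rw [Real.log_div (Real.exp_ne_zero _) hZ.ne', Real.log_exp]
  have hval : (∑ y, q y * θ y) + (-∑ y, q y * Real.log (q y)) = Real.log Z + l * c := by
    have h1 : (∑ y, q y * Real.log (q y)) =
        (∑ y, q y * θ y) - l * (∑ y, A y * q y) - (∑ y, q y) * Real.log Z := by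
      rw [Finset.mul_sum, Finset.sum_mul, ← Finset.sum_sub_distrib, ← Finset.sum_sub_distrib]
      exact Finset.sum_congr rfl (fun y _ => by rw [hlogq y]; ring)
    rw [h1, hqc, hq1]
    ring
  refine ⟨Real.log Z + l * c, ⟨⟨q, fun y => (hq0 y).le, hq1, hqc, hval.symm⟩, ?_⟩,
    ⟨⟨l, rfl⟩, ?_⟩⟩
  · -- upper bound for the primal
    rintro u ⟨p, hp, hs, hc, hu⟩
    have := gibbs_ineq p (fun y => θ y - l * A y) hp hs
    have h2 : (∑ y, p y * (θ y - l * A y)) = (∑ y, p y * θ y) - l * c := by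
      rw [← hc, Finset.mul_sum, ← Finset.sum_sub_distrib]
      exact Finset.sum_congr rfl (fun y _ => by ring)
    rw [h2, ← hZdef] at this
    rw [hu]
    linarith
  · -- lower bound for the dual
    rintro u ⟨lam, hu⟩
    have := gibbs_ineq q (fun y => θ y - lam * A y) (fun y => (hq0 y).le) hq1
    have h2 : (∑ y, q y * (θ y - lam * A y)) = (∑ y, q y * θ y) - lam * c := by
      rw [← hqc, Finset.mul_sum, ← Finset.sum_sub_distrib]
      exact Finset.sum_congr rfl (fun y _ => by ring)
    rw [h2] at this
    rw [hu]
    linarith [hval]
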